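/- Let G be a finite group and k a field. In the commutative k-algebra k^G of k-valued functions on G with pointwise operations, let e_g denote the indicator function of g ∈ G (e_g(a) = 1 if a = g and 0 otherwise). Then the ideal of k^G generated by the elements e_{hg} − e_{gh}, for all g, h ∈ G, equals the ideal of all functions vanishing on the center Z(G) of G. (This computes the quotient Hopf algebra H^⟨1⟩ ≅ k^{Z(G)} for H = k^G, and hence the first lazy homology Hopf algebra H₁^ℓ(k^G) ≅ k^{Z(G)}.) -/
import Mathlib


/-- For a finite group `G` and a field `k`, in the algebra
`k^G` of `k`-valued functions on `G` (pointwise operations), the ideal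
generated by the elements `e_{hg} − e_{gh}` (for `g, h ∈ G`, where `e_g` is
the indicator function of `g`) equals the ideal of all functions vanishing on
the center `Z(G)` of `G`. -/
theorem ideal_span_indicator_commutators_eq_vanishing_on_center
    (k : Type*) [Field k] (G : Type*) [Group G] [Fintype G] [DecidableEq G] :
    ∀ f : G → k,
      f ∈ Ideal.span {f : G → k | ∃ g h : G,
        f = (fun a => if a = h * g then (1 : k) else 0)
          - (fun a => if a = g * h then (1 : k) else 0)}
      ↔ ∀ z ∈ Subgroup.center G, f z = 0 := by
  intro f
  set S := {f : G → k | ∃ g h : G,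
        f = (fun a => if a = h * g then (1 : k) else 0)
          - (fun a => if a = g * h then (1 : k) else 0)} with hS
  constructor
  · intro hf z hz
    let I : Ideal (G → k) :=
      { carrier := {f : G → k | ∀ z ∈ Subgroup.center G, f z = 0}
        add_mem' := fun ha hb z hz => by
          simp only [Pi.add_apply, ha z hz, hb z hz, add_zero]
        zero_mem' := fun z hz => rfl
        smul_mem' := fun c x hx z hz => by
          simp only [smul_eq_mul, Pi.mul_apply, hx z hz, mul_zero] }
    have hle : Ideal.span S ≤ I := by
      apply Ideal.span_le.mpr
      rintro u ⟨g, h, rfl⟩ z hz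
      have hcom := Subgroup.mem_center_iff.mp hz
      have key : z = h * g ↔ z = g * h := by
        constructor
        · rintro rfl
          have : g * (h * g) = (h * g) * g := hcom g
          have : g * h * g = (h * g) * g := by rw [← this]; group
          exact (mul_right_cancel this).symm
        · rintro rfl
          have : g * (g * h) = (g * h) * g := hcom g
          have : g * (g * h) = g * (h * g) := by rw [this]; group
          exact mul_left_cancel this
      show (_ - _ : G → k) z = 0
      simp only [Pi.sub_apply]
      by_cases hzhg : z = h * g
      · rw [if_pos hzhg, if_pos (key.mp hzhg)]; ring
      · rw [if_neg hzhg, if_neg (fun hc => hzhg (key.mpr hc))]; ring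
    exact hle hf z hz
  · intro hf
    have hrep : f = ∑ a : G, (fun _ => f a) * (fun x => if x = a then (1 : k) else 0) := by
      funext x
      rw [Finset.sum_apply]
      simp only [Pi.mul_apply]
      rw [Finset.sum_eq_single x]
      · simp
      · intro b _ hb
        rw [if_neg (fun hc => hb hc.symm), mul_zero]
      · intro hx; exact absurd (Finset.mem_univ x) hx
    rw [hrep]
    apply Ideal.sum_mem
    intro a _
    by_cases ha : a ∈ Subgroup.center G
    · have : f a = 0 := hf a ha
      rw [this]
      have h0 : ((fun _ => (0:k)) : G → k) * (fun x => if x = a then (1:k) else 0) = 0 := by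
        funext x; simp
      rw [h0]
      exact Ideal.zero_mem _
    · -- a is not central: find g with g * a ≠ a * g
      rw [Subgroup.mem_center_iff] at ha
      push_neg at ha
      obtain ⟨g, hg⟩ := ha
      set h := a * g⁻¹ with hh
      have hgen : ((fun x => if x = h * g then (1 : k) else 0)
          - (fun x => if x = g * h then (1 : k) else 0)) ∈ S := ⟨g, h, rfl⟩
      have hhg : h * g = a := by rw [hh]; group
      have hne : a ≠ g * h := by
        intro hc
        apply hg
        rw [hh] at hc
        have : a * g = g * (a * g⁻¹) * g := by rw [← hc]
        rw [this]; group
      have heq : (fun _ => f a) * (fun x => if x = a then (1 : k) else 0)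
          = ((fun _ => f a) * (fun x => if x = a then (1 : k) else 0)) *
            ((fun x => if x = h * g then (1 : k) else 0)
              - (fun x => if x = g * h then (1 : k) else 0)) := by
        funext x
        simp only [Pi.mul_apply, Pi.sub_apply]
        by_cases hx : x = a
        · rw [if_pos hx, if_pos (hx.trans hhg.symm), if_neg (fun hc => hne (hx.symm.trans hc))]
          ring
        · rw [if_neg hx]; ring
      rw [heq]
      exact Ideal.mul_mem_left _ _ (Ideal.subset_span hgen)
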